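/- Extension by a pure state: for every N×N density matrix ρ (N ≥ 2) and every unit vector ψ ∈ ℂᴺ, the quantum statistical complexity of the N²×N² density matrix ρ ⊗ |ψ⟩⟨ψ| satisfies C(ρ ⊗ |ψ⟩⟨ψ|) ≤ (S(ρ)/(2 log N)) · ( D(ρ, I/N) + (N−1)/N ). -/

import Mathlib

open Matrix BigOperators Kronecker ComplexOrder

noncomputable def vNEntropy {m : Type*} [Fintype m] [DecidableEq m]
    (ρ : Matrix m m ℂ) : ℝ :=
  if h : ρ.IsHermitian then -∑ i, h.eigenvalues i * Real.log (h.eigenvalues i) else 0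

noncomputable def traceNorm {m : Type*} [Fintype m] [DecidableEq m]
    (A : Matrix m m ℂ) : ℝ :=
  if h : A.IsHermitian then ∑ i, |h.eigenvalues i| else 0

noncomputable def mmix (m : Type*) [Fintype m] [DecidableEq m] : Matrix m m ℂ :=
  ((Fintype.card m : ℂ))⁻¹ • 1

noncomputable def diseq {m : Type*} [Fintype m] [DecidableEq m]
    (ρ : Matrix m m ℂ) : ℝ := (1/2) * traceNorm (ρ - mmix m)

noncomputable def qscm {m : Type*} [Fintype m] [DecidableEq m]
    (ρ : Matrix m m ℂ) : ℝ :=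
  vNEntropy ρ * diseq ρ / Real.log (Fintype.card m)

noncomputable def kronPow {N : ℕ} (ρ : Matrix (Fin N) (Fin N) ℂ) (n : ℕ) :
    Matrix (Fin n → Fin N) (Fin n → Fin N) ℂ :=
  fun x y => ∏ i, ρ (x i) (y i)

section AuxQSCM
open Polynomial Finset

variable {n : Type*} [Fintype n] [DecidableEq n]

lemma myCharmatrixDiagonal (v : n → ℂ) :
    charmatrix (diagonal v) = diagonal (fun i => (X : ℂ[X]) - C (v i)) := by
  ext i j
  by_cases h : i = j
  · subst h; simp
  · rw [charmatrix_apply_ne _ _ _ h, diagonal_apply_ne _ h, diagonal_apply_ne _ h]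
    simp

lemma myCharpolyDiagonal (v : n → ℂ) :
    (diagonal v).charpoly = ∏ i, ((X : ℂ[X]) - C (v i)) := by
  rw [Matrix.charpoly, myCharmatrixDiagonal, det_diagonal]

lemma diag_const_eq_smul_one (a : ℂ[X]) :
    Matrix.scalar n a = a • (1 : Matrix n n ℂ[X]) := by
  ext i j
  by_cases h : i = j
  · subst h; simp
  · simp [diagonal_apply_ne _ h, Matrix.one_apply_ne h]

lemma myCharpolyConj (W : Matrix.unitaryGroup n ℂ) (D : Matrix n n ℂ) :
    ((W : Matrix n n ℂ) * D * star (W : Matrix n n ℂ)).charpoly = D.charpoly := by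
  have hW1 : (W : Matrix n n ℂ) * star (W : Matrix n n ℂ) = 1 :=
    Matrix.mem_unitaryGroup_iff.mp W.2
  set f : Matrix n n ℂ →+* Matrix n n ℂ[X] := (C : ℂ →+* ℂ[X]).mapMatrix with hf
  have key : charmatrix ((W : Matrix n n ℂ) * D * star (W : Matrix n n ℂ)) =
      f (W : Matrix n n ℂ) * charmatrix D * f (star (W : Matrix n n ℂ)) := by
    rw [charmatrix, charmatrix, mul_sub, sub_mul, diag_const_eq_smul_one]
    congr 1
    · rw [Matrix.mul_smul, mul_one, Matrix.smul_mul, ← _root_.map_mul, hW1, _root_.map_one]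
    · rw [← _root_.map_mul, ← _root_.map_mul]
  have hdet : (f (W : Matrix n n ℂ)).det * (f (star (W : Matrix n n ℂ))).det = 1 := by
    rw [← det_mul, ← _root_.map_mul, hW1, _root_.map_one, det_one]
  rw [Matrix.charpoly, key, det_mul, det_mul, Matrix.charpoly]
  ring_nf
  rw [mul_comm, ← mul_assoc, mul_comm (f (star (W : Matrix n n ℂ))).det, hdet, one_mul]

lemma myIsHermitianConj (W : Matrix.unitaryGroup n ℂ) (d : n → ℝ) :
    ((W : Matrix n n ℂ) * diagonal (fun i => (d i : ℂ)) * star (W : Matrix n n ℂ)).IsHermitian := by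
  have : IsHermitian (diagonal (fun i => (d i : ℂ))) :=
    isHermitian_diagonal_of_self_adjoint _ (by
      funext i
      simp [Pi.star_apply, Complex.star_def, Complex.conj_ofReal])
  unfold Matrix.IsHermitian
  rw [conjTranspose_mul, conjTranspose_mul, this, Matrix.star_eq_conjTranspose,
    conjTranspose_conjTranspose, mul_assoc]

lemma eig_sum_eq {A : Matrix n n ℂ} (hA : A.IsHermitian) (W : Matrix.unitaryGroup n ℂ) (d : n → ℝ)
    (hAW : A = (W : Matrix n n ℂ) * diagonal (fun i => (d i : ℂ)) * star (W : Matrix n n ℂ))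
    (f : ℝ → ℝ) :
    ∑ i, f (hA.eigenvalues i) = ∑ i, f (d i) := by
  have h1 : A.charpoly = ∏ i, ((X : ℂ[X]) - C ((d i : ℂ))) := by
    rw [hAW, myCharpolyConj, myCharpolyDiagonal]
  have h2 : A.charpoly = ∏ i, ((X : ℂ[X]) - C ((hA.eigenvalues i : ℂ))) := by
    have hs := congrArg Matrix.charpoly hA.spectral_theorem
    rwa [Unitary.conjStarAlgAut_apply, myCharpolyConj, myCharpolyDiagonal] at hs
  have hprod := h1.symm.trans h2
  have hroots : Multiset.map (fun i => ((d i : ℝ) : ℂ)) Finset.univ.val =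
      Multiset.map (fun i => ((hA.eigenvalues i : ℝ) : ℂ)) Finset.univ.val := by
    have e1 := congrArg Polynomial.roots hprod
    have c1 : (fun i : n => (X : ℂ[X]) - C ((d i : ℝ) : ℂ)) =
        (fun a : ℂ => (X : ℂ[X]) - C a) ∘ (fun i => ((d i : ℝ) : ℂ)) := rfl
    have c2 : (fun i : n => (X : ℂ[X]) - C ((hA.eigenvalues i : ℝ) : ℂ)) =
        (fun a : ℂ => (X : ℂ[X]) - C a) ∘ (fun i => ((hA.eigenvalues i : ℝ) : ℂ)) := rfl
    rwa [Finset.prod_eq_multiset_prod, Finset.prod_eq_multiset_prod, c1, c2,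
      ← Multiset.map_map (fun a => (X : ℂ[X]) - C a), ← Multiset.map_map (fun a => (X : ℂ[X]) - C a),
      Polynomial.roots_multiset_prod_X_sub_C, Polynomial.roots_multiset_prod_X_sub_C] at e1
  have hms : Multiset.map d Finset.univ.val = Multiset.map hA.eigenvalues Finset.univ.val := by
    have := congrArg (Multiset.map Complex.re) hroots
    simpa [Multiset.map_map, Function.comp_def] using this
  have key : ∀ g : n → ℝ, ∑ i, f (g i) = ((Finset.univ.val.map g).map f).sum := by
    intro g; rw [Multiset.map_map]; rfl
  rw [key, key, hms]

lemma conj_diag_sub_smul (W : Matrix.unitaryGroup n ℂ) (d : n → ℝ) (c : ℝ) :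
    (W : Matrix n n ℂ) * diagonal (fun i => (d i : ℂ)) * star (W : Matrix n n ℂ)
      - ((c : ℝ) : ℂ) • (1 : Matrix n n ℂ) =
    (W : Matrix n n ℂ) * diagonal (fun i => ((d i - c : ℝ) : ℂ)) * star (W : Matrix n n ℂ) := by
  have hW1 : (W : Matrix n n ℂ) * star (W : Matrix n n ℂ) = 1 :=
    Matrix.mem_unitaryGroup_iff.mp W.2
  have hd : diagonal (fun i => ((d i - c : ℝ) : ℂ)) =
      diagonal (fun i => (d i : ℂ)) - ((c : ℝ) : ℂ) • (1 : Matrix n n ℂ) := by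
    ext i j
    by_cases h : i = j
    · subst h
      simp only [diagonal_apply_eq, Matrix.sub_apply, Matrix.smul_apply, Matrix.one_apply_eq,
        smul_eq_mul, mul_one]
      push_cast
      ring
    · simp [diagonal_apply_ne _ h, Matrix.one_apply_ne h]
  rw [hd, mul_sub, sub_mul, Matrix.mul_smul, Matrix.smul_mul, mul_one, hW1]

lemma kron_conjTranspose {l m p q : Type*} (A : Matrix l m ℂ) (B : Matrix p q ℂ) :
    (A ⊗ₖ B)ᴴ = Aᴴ ⊗ₖ Bᴴ := by
  ext ⟨i, j⟩ ⟨k, l'⟩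
  simp [conjTranspose_apply, Matrix.kroneckerMap_apply, star_mul']

lemma kron_unitary {m p : Type*} [Fintype m] [DecidableEq m] [Fintype p] [DecidableEq p]
    (U : Matrix.unitaryGroup m ℂ) (V : Matrix.unitaryGroup p ℂ) :
    (U : Matrix m m ℂ) ⊗ₖ (V : Matrix p p ℂ) ∈ Matrix.unitaryGroup (m × p) ℂ := by
  rw [Matrix.mem_unitaryGroup_iff]
  rw [Matrix.star_eq_conjTranspose, kron_conjTranspose, ← Matrix.mul_kronecker_mul]
  rw [← Matrix.star_eq_conjTranspose, ← Matrix.star_eq_conjTranspose,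
    Matrix.mem_unitaryGroup_iff.mp U.2, Matrix.mem_unitaryGroup_iff.mp V.2,
    Matrix.one_kronecker_one]

lemma exists_unitary_pure {N : ℕ} [NeZero N] (ψ : Fin N → ℂ) (hψ : star ψ ⬝ᵥ ψ = 1) :
    ∃ V : Matrix.unitaryGroup (Fin N) ℂ,
      vecMulVec ψ (star ψ) = (V : Matrix (Fin N) (Fin N) ℂ) *
        diagonal (fun j => (((if j = (0 : Fin N) then 1 else 0 : ℝ)) : ℂ)) *
        star (V : Matrix (Fin N) (Fin N) ℂ) := by
  set ψ' : EuclideanSpace ℂ (Fin N) := WithLp.toLp 2 ψ with hψ'def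
  have hinner : (inner ℂ ψ' ψ' : ℂ) = 1 := by
    rw [PiLp.inner_apply]
    simp only [RCLike.inner_apply, hψ'def, WithLp.ofLp_toLp]
    rw [← hψ, dotProduct]
    exact Finset.sum_congr rfl fun x _ => mul_comm _ _
  have hnorm : ‖ψ'‖ = 1 := by
    have h3 : ‖ψ'‖ ^ 2 = 1 := by
      have h2 := inner_self_eq_norm_sq (𝕜 := ℂ) (x := ψ')
      rw [hinner] at h2
      simpa using h2.symm
    have h4 : (‖ψ'‖ - 1) * (‖ψ'‖ + 1) = 0 := by ring_nf; nlinarith [h3]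
    rcases mul_eq_zero.mp h4 with h | h
    · linarith
    · have := norm_nonneg ψ'; linarith
  have horth : Orthonormal ℂ (Set.restrict {(0 : Fin N)} (fun _ : Fin N => ψ')) := by
    constructor
    · intro i; exact hnorm
    · intro i j hij
      exact absurd (Subtype.ext (by
        have hi := i.2; have hj := j.2
        simp only [Set.mem_singleton_iff] at hi hj
        rw [hi, hj])) hij
  obtain ⟨b, hb⟩ := horth.exists_orthonormalBasis_extension_of_card_eq (by simp)
  have hb0 : b 0 = ψ' := hb 0 rfl
  have hVmem : Matrix.of (fun i j : Fin N => b j i) ∈ Matrix.unitaryGroup (Fin N) ℂ := by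
    rw [Matrix.mem_unitaryGroup_iff']
    ext j k
    have hon := orthonormal_iff_ite.mp b.orthonormal j k
    rw [PiLp.inner_apply] at hon
    simp only [RCLike.inner_apply] at hon
    simp only [Matrix.mul_apply, Matrix.star_apply, Matrix.of_apply, Matrix.one_apply]
    simpa [mul_comm] using hon
  refine ⟨⟨Matrix.of (fun i j : Fin N => b j i), hVmem⟩, ?_⟩
  have hV0 : ∀ i, (Matrix.of (fun i j : Fin N => b j i)) i 0 = ψ i := by
    intro i; simp only [Matrix.of_apply, hb0, hψ'def, PiLp.toLp_apply]
  ext i k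
  rw [vecMulVec_apply, Matrix.mul_apply]
  simp only [Matrix.mul_diagonal, Matrix.star_apply]
  rw [Finset.sum_eq_single (0 : Fin N)]
  · rw [if_pos rfl, hV0 i, hV0 k]
    simp [Pi.star_apply]
  · intro j _ hj
    rw [if_neg hj]
    simp
  · intro h; exact absurd (Finset.mem_univ _) h

end AuxQSCM

/-- extension by a pure state. -/
theorem qscm_extension_pure {N : ℕ} (hN : 2 ≤ N)
    (ρ : Matrix (Fin N) (Fin N) ℂ) (hρ : ρ.PosSemidef) (htr : ρ.trace = 1)
    (ψ : Fin N → ℂ) (hψ : star ψ ⬝ᵥ ψ = 1) :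
    qscm (ρ ⊗ₖ Matrix.vecMulVec ψ (star ψ)) ≤
      vNEntropy ρ / (2 * Real.log N) * (diseq ρ + ((N : ℝ) - 1) / N) := by
  haveI : NeZero N := ⟨by omega⟩
  have hH : ρ.IsHermitian := hρ.1
  have hspecρ : ρ = (hH.eigenvectorUnitary : Matrix (Fin N) (Fin N) ℂ) *
      diagonal (fun i => ((hH.eigenvalues i : ℝ) : ℂ)) *
      star (hH.eigenvectorUnitary : Matrix (Fin N) (Fin N) ℂ) := hH.spectral_theorem
  set lam : Fin N → ℝ := hH.eigenvalues with hlamdef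
  obtain ⟨V, hP⟩ := exists_unitary_pure ψ hψ
  set eR : Fin N → ℝ := fun j => if j = (0 : Fin N) then 1 else 0 with heR
  have hWmem : (hH.eigenvectorUnitary : Matrix (Fin N) (Fin N) ℂ) ⊗ₖ
      (V : Matrix (Fin N) (Fin N) ℂ) ∈ Matrix.unitaryGroup (Fin N × Fin N) ℂ :=
    kron_unitary _ _
  set W : Matrix.unitaryGroup (Fin N × Fin N) ℂ := ⟨_, hWmem⟩ with hWdef
  set dd : Fin N × Fin N → ℝ := fun p => lam p.1 * eR p.2 with hdd
  -- decomposition of the kronecker product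
  have hst : star (W : Matrix (Fin N × Fin N) (Fin N × Fin N) ℂ) =
      star (hH.eigenvectorUnitary : Matrix (Fin N) (Fin N) ℂ) ⊗ₖ
      star (V : Matrix (Fin N) (Fin N) ℂ) := by
    rw [Matrix.star_eq_conjTranspose, Matrix.star_eq_conjTranspose,
      Matrix.star_eq_conjTranspose]
    exact kron_conjTranspose _ _
  have hdiag : (diagonal (fun p : Fin N × Fin N => ((dd p : ℝ) : ℂ))) =
      diagonal (fun i => ((lam i : ℝ) : ℂ)) ⊗ₖ diagonal (fun j => ((eR j : ℝ) : ℂ)) := by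
    rw [Matrix.diagonal_kronecker_diagonal]
    congr 1
    funext p
    push_cast [hdd]
    rfl
  have hσ : ρ ⊗ₖ vecMulVec ψ (star ψ) =
      (W : Matrix (Fin N × Fin N) (Fin N × Fin N) ℂ) *
      diagonal (fun p : Fin N × Fin N => ((dd p : ℝ) : ℂ)) *
      star (W : Matrix (Fin N × Fin N) (Fin N × Fin N) ℂ) := by
    rw [hdiag, hst]
    show ρ ⊗ₖ vecMulVec ψ (star ψ) = _ ⊗ₖ _ * _ * _
    rw [← Matrix.mul_kronecker_mul, ← Matrix.mul_kronecker_mul, ← hspecρ, ← hP]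
  -- constants
  set c1 : ℝ := (N : ℝ)⁻¹ with hc1
  set c2 : ℝ := ((N : ℝ) * N)⁻¹ with hc2
  have hNpos : (0 : ℝ) < N := by positivity
  have hN2 : (2 : ℝ) ≤ (N : ℝ) := by exact_mod_cast hN
  have hc2nonneg : (0 : ℝ) ≤ c2 := by positivity
  -- subtracted decompositions
  have hmmix2 : mmix (Fin N × Fin N) = ((c2 : ℝ) : ℂ) • (1 : Matrix (Fin N × Fin N) (Fin N × Fin N) ℂ) := by
    rw [mmix, hc2]
    congr 1
    push_cast [Fintype.card_prod, Fintype.card_fin]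
    ring
  have hmmix1 : mmix (Fin N) = ((c1 : ℝ) : ℂ) • (1 : Matrix (Fin N) (Fin N) ℂ) := by
    rw [mmix, hc1]
    congr 1
    push_cast [Fintype.card_fin]
    ring
  have hσsub : ρ ⊗ₖ vecMulVec ψ (star ψ) - mmix (Fin N × Fin N) =
      (W : Matrix (Fin N × Fin N) (Fin N × Fin N) ℂ) *
      diagonal (fun p : Fin N × Fin N => ((dd p - c2 : ℝ) : ℂ)) *
      star (W : Matrix (Fin N × Fin N) (Fin N × Fin N) ℂ) := by
    rw [hσ, hmmix2, conj_diag_sub_smul]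
  have hρsub : ρ - mmix (Fin N) =
      (hH.eigenvectorUnitary : Matrix (Fin N) (Fin N) ℂ) *
      diagonal (fun i => ((lam i - c1 : ℝ) : ℂ)) *
      star (hH.eigenvectorUnitary : Matrix (Fin N) (Fin N) ℂ) := by
    conv_lhs => rw [hspecρ, hmmix1]
    rw [conj_diag_sub_smul]
  -- hermitian facts
  have hσH : (ρ ⊗ₖ vecMulVec ψ (star ψ)).IsHermitian := by
    rw [hσ]; exact myIsHermitianConj W _
  have hσsubH : (ρ ⊗ₖ vecMulVec ψ (star ψ) - mmix (Fin N × Fin N)).IsHermitian := by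
    rw [hσsub]; exact myIsHermitianConj W _
  have hρsubH : (ρ - mmix (Fin N)).IsHermitian := by
    rw [hρsub]; exact myIsHermitianConj _ _
  -- eigenvalue facts for ρ
  have hlam0 : ∀ i, 0 ≤ lam i := fun i => hρ.eigenvalues_nonneg i
  have hsum1 : ∑ i, lam i = 1 := by
    have ht : ρ.trace = ∑ i, ((lam i : ℝ) : ℂ) := by
      conv_lhs => rw [hspecρ]
      rw [Matrix.trace_mul_cycle,
        Matrix.mem_unitaryGroup_iff'.mp hH.eigenvectorUnitary.2, Matrix.one_mul,
        Matrix.trace_diagonal]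
    rw [htr] at ht
    have := congrArg Complex.re ht
    simpa using this.symm
  have hlam1 : ∀ i, lam i ≤ 1 := by
    intro i
    rw [← hsum1]
    exact Finset.single_le_sum (fun j _ => hlam0 j) (Finset.mem_univ i)
  -- sum helper over Fin N
  have sum_ite : ∀ a bb : ℝ, (∑ j : Fin N, if j = (0 : Fin N) then a else bb) =
      a + ((N : ℝ) - 1) * bb := by
    intro a bb
    have h : ∀ j : Fin N, (if j = (0 : Fin N) then a else bb) =
        (if j = (0 : Fin N) then a - bb else 0) + bb := by
      intro j; split <;> ring
    rw [Finset.sum_congr rfl (fun j _ => h j), Finset.sum_add_distrib]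
    simp [Finset.sum_ite_eq', Finset.card_univ]
    ring
  -- entropy computation
  have hent : ∑ p, hσH.eigenvalues p * Real.log (hσH.eigenvalues p) =
      ∑ i, lam i * Real.log (lam i) := by
    have h0 := eig_sum_eq hσH W dd hσ (fun x => x * Real.log x)
    rw [h0, Fintype.sum_prod_type]
    refine Finset.sum_congr rfl fun i _ => ?_
    have h : ∀ j : Fin N, dd (i, j) * Real.log (dd (i, j)) =
        if j = (0 : Fin N) then lam i * Real.log (lam i) else 0 := by
      intro j
      by_cases hj : j = (0 : Fin N)
      · simp [hdd, heR, hj]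
      · simp [hdd, heR, hj]
    rw [Finset.sum_congr rfl fun j _ => h j, sum_ite]
    ring
  -- trace norm computations
  have hTσ : ∑ p, |hσsubH.eigenvalues p| =
      (∑ i, |lam i - c2|) + (N : ℝ) * (((N : ℝ) - 1) * c2) := by
    have h0 := eig_sum_eq hσsubH W (fun p => dd p - c2) hσsub (fun x => |x|)
    rw [h0, Fintype.sum_prod_type]
    have hin : ∀ i, ∑ j : Fin N, |dd (i, j) - c2| = |lam i - c2| + ((N : ℝ) - 1) * c2 := by
      intro i
      have h : ∀ j : Fin N, |dd (i, j) - c2| =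
          if j = (0 : Fin N) then |lam i - c2| else c2 := by
        intro j
        by_cases hj : j = (0 : Fin N)
        · simp [hdd, heR, hj]
        · simp [hdd, heR, hj, abs_of_nonneg hc2nonneg]
      rw [Finset.sum_congr rfl fun j _ => h j, sum_ite]
    rw [Finset.sum_congr rfl fun i _ => hin i, Finset.sum_add_distrib]
    simp [Finset.card_univ, mul_comm]
  have hTρ : ∑ i, |hρsubH.eigenvalues i| = ∑ i, |lam i - c1| := by
    have h0 := eig_sum_eq hρsubH hH.eigenvectorUnitary (fun i => lam i - c1) hρsub
      (fun x => |x|)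
    simpa using h0
  -- entropy nonneg
  have hS : 0 ≤ -∑ i, lam i * Real.log (lam i) := by
    rw [neg_nonneg]
    refine Finset.sum_nonpos fun i _ => ?_
    have hlog := Real.log_nonpos (hlam0 i) (hlam1 i)
    nlinarith [hlam0 i]
  -- bound on the trace norm sum
  have hc12 : c2 ≤ c1 := by
    rw [hc1, hc2]
    apply inv_anti₀ hNpos
    nlinarith
  have hB : ∑ i, |lam i - c2| ≤ (∑ i, |lam i - c1|) + (N : ℝ) * (c1 - c2) := by
    have hpt : ∀ i, |lam i - c2| ≤ |lam i - c1| + (c1 - c2) := by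
      intro i
      have he : lam i - c2 = (lam i - c1) + (c1 - c2) := by ring
      rw [he]
      exact (abs_add_le _ _).trans (by rw [abs_of_nonneg (sub_nonneg.mpr hc12)])
    calc ∑ i, |lam i - c2| ≤ ∑ i : Fin N, (|lam i - c1| + (c1 - c2)) :=
          Finset.sum_le_sum fun i _ => hpt i
      _ = (∑ i, |lam i - c1|) + (N : ℝ) * (c1 - c2) := by
          rw [Finset.sum_add_distrib]
          simp [Finset.card_univ, mul_comm]
          ring
  -- log facts
  have hlogN : 0 < Real.log N := Real.log_pos (by exact_mod_cast (by omega : 1 < N))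
  have hlogcard : Real.log ((Fintype.card (Fin N × Fin N) : ℕ) : ℝ) = 2 * Real.log N := by
    rw [show ((Fintype.card (Fin N × Fin N) : ℕ) : ℝ) = (N : ℝ) * (N : ℝ) by
      push_cast [Fintype.card_prod, Fintype.card_fin]; ring]
    rw [Real.log_mul (ne_of_gt hNpos) (ne_of_gt hNpos), two_mul]
  -- assemble
  simp only [qscm, vNEntropy, diseq, traceNorm]
  rw [dif_pos hσH, dif_pos hσsubH, dif_pos hH, dif_pos hρsubH]
  rw [← hlamdef, hent, hTσ, hTρ, hlogcard]
  have harith : (1 : ℝ)/2 * (((∑ i, |lam i - c1|) + (N : ℝ) * (c1 - c2)) +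
      (N : ℝ) * (((N : ℝ) - 1) * c2)) =
      1/2 * (∑ i, |lam i - c1|) + ((N : ℝ) - 1) / N := by
    generalize (∑ i, |lam i - c1|) = S
    rw [hc1, hc2]
    field_simp
    ring
  have hD : (1 : ℝ)/2 * ((∑ i, |lam i - c2|) + (N : ℝ) * (((N : ℝ) - 1) * c2)) ≤
      1/2 * (∑ i, |lam i - c1|) + ((N : ℝ) - 1) / N := by
    rw [← harith]
    linarith
  calc (-∑ i, lam i * Real.log (lam i)) *
        (1/2 * ((∑ i, |lam i - c2|) + (N : ℝ) * (((N : ℝ) - 1) * c2))) / (2 * Real.log N)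
      = (-∑ i, lam i * Real.log (lam i)) / (2 * Real.log N) *
        (1/2 * ((∑ i, |lam i - c2|) + (N : ℝ) * (((N : ℝ) - 1) * c2))) := by ring
    _ ≤ (-∑ i, lam i * Real.log (lam i)) / (2 * Real.log N) *
        (1/2 * (∑ i, |lam i - c1|) + ((N : ℝ) - 1) / N) := by
        apply mul_le_mul_of_nonneg_left hD
        positivity
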